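/- arXiv:1306.1018 — 3 statements merged into one kernel-verified Lean document; each statement's English description precedes it below -/
import Mathlib

section
/- Let ω be a weight satisfying conditions (W1) and (W2), and let a ∈ 𝔻 be fixed. Then there exists a constant c > 0 such that for all z ∈ 𝔻: (1/c) ω(z) ≤ ω(σ_a(z)) ≤ c ω(z), where σ_a(z) = (a − z)/(1 − ā z) is the Möbius transformation of 𝔻 interchanging 0 and a. -/
open MeasureTheory Complex Metric Set Filter
open scoped ENNReal InnerProductSpace

noncomputable section

/-- The open unit disk in the complex plane. -/
def unitDisk : Set ℂ := Metric.ball 0 1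

/-- The normalized area measure `dA` on `ℂ`. -/
def dA : Measure ℂ := (ENNReal.ofReal Real.pi)⁻¹ • volume

/-- The radial extension of a function on `[0,1)` to the disk: `ω(z) = ω(|z|)`. -/
def radial (ω : ℝ → ℝ) (z : ℂ) : ℝ := ω ‖z‖

/-- A weight: a positive function on `[0,1)`, of class `C²`, integrable. -/
structure IsWeight (ω : ℝ → ℝ) : Prop where
  pos : ∀ r ∈ Set.Ico (0:ℝ) 1, 0 < ω r
  smooth : ContDiffOn ℝ 2 ω (Set.Ico (0:ℝ) 1)
  integrable : IntegrableOn ω (Set.Ico (0:ℝ) 1)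

/-- An admissible weight: conditions (W1)–(W4). -/
structure IsAdmissibleWeight (ω : ℝ → ℝ) extends IsWeight ω : Prop where
  W1 : AntitoneOn ω (Set.Ico (0:ℝ) 1)
  W2 : ∃ δ > (0:ℝ), MonotoneOn (fun r => ω r * (1 - r) ^ (-(1 + δ))) (Set.Ico (0:ℝ) 1)
  W3 : Tendsto ω (nhdsWithin 1 (Set.Iio 1)) (nhds 0)
  W4 : (ConvexOn ℝ (Set.Ico (0:ℝ) 1) ω ∧ Tendsto (deriv ω) (nhdsWithin 1 (Set.Iio 1)) (nhds 0))
        ∨ ConcaveOn ℝ (Set.Ico (0:ℝ) 1) ω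

/-- The (L1) condition of Lusky. -/
def L1Condition (ω : ℝ → ℝ) : Prop :=
  0 < ⨅ k : ℕ, ω (1 - 2 ^ (-(k:ℝ) - 1)) / ω (1 - 2 ^ (-(k:ℝ)))

/-- The generalized Nevanlinna counting function `N_{φ,ω}(z) = ∑_{a ∈ φ⁻¹(z)} ω(a)`. -/
def Nevanlinna (ω : ℝ → ℝ) (φ : ℂ → ℂ) (z : ℂ) : ℝ :=
  ∑' a : {w : ℂ // w ∈ unitDisk ∧ φ w = z}, radial ω (a : ℂ)

/-- Membership in the weighted Hilbert space `H_ω`. -/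
def memHω (ω : ℝ → ℝ) (f : ℂ → ℂ) : Prop :=
  DifferentiableOn ℂ f unitDisk ∧
    IntegrableOn (fun z => ‖deriv f z‖ ^ 2 * radial ω z) unitDisk dA

/-- The squared norm on the weighted Hilbert space `H_ω`. -/
def HωNormSq (ω : ℝ → ℝ) (f : ℂ → ℂ) : ℝ :=
  ‖f 0‖ ^ 2 + ∫ z in unitDisk, ‖deriv f z‖ ^ 2 * radial ω z ∂dA

/-- Membership in the weighted Bergman space `A²_ω`. -/
def memAω (ω : ℝ → ℝ) (f : ℂ → ℂ) : Prop :=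
  DifferentiableOn ℂ f unitDisk ∧
    IntegrableOn (fun z => ‖f z‖ ^ 2 * radial ω z) unitDisk dA

/-- The squared norm on the weighted Bergman space `A²_ω`. -/
def AωNormSq (ω : ℝ → ℝ) (f : ℂ → ℂ) : ℝ :=
  ∫ z in unitDisk, ‖f z‖ ^ 2 * radial ω z ∂dA

/-- `ω_n`: with `ω_0 = 1` and `ω_n = 2 n² ∫₀¹ r^{2n-1} ω(r) dr` for `n ≥ 1`. -/
def ωSeq (ω : ℝ → ℝ) (n : ℕ) : ℝ :=
  if n = 0 then 1 else 2 * (n:ℝ) ^ 2 * ∫ r in (0:ℝ)..1, r ^ (2 * n - 1) * ω r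

/-- `p_n = 2 ∫₀¹ r^{2n+1} ω(r) dr`. -/
def pSeq (ω : ℝ → ℝ) (n : ℕ) : ℝ := 2 * ∫ r in (0:ℝ)..1, r ^ (2 * n + 1) * ω r

/-- The filter of `z ∈ ℂ` with `|z| → 1⁻`. -/
def boundaryFilter : Filter ℂ := Filter.comap (fun z : ℂ => ‖z‖) (nhdsWithin 1 (Set.Iio 1))

/-- The Möbius transformation `σ_a(z) = (a - z)/(1 - ā z)`. -/
def mobius (a z : ℂ) : ℂ := (a - z) / (1 - (starRingEnd ℂ) a * z)

/-- The pseudohyperbolic disk `Δ(a,r)`. -/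
def pseudoDisk (a : ℂ) (r : ℝ) : Set ℂ := {z ∈ unitDisk | ‖mobius a z‖ < r}

/-- The hyperbolic measure `dλ(z) = (1-|z|²)⁻² dA(z)`. -/
def hyperbolicMeasure : Measure ℂ :=
  dA.withDensity fun z => ENNReal.ofReal (((1 - ‖z‖ ^ 2) ^ 2)⁻¹)

/-- The essential norm of an operator: its distance to the compact operators. -/
def essNorm {H : Type} [NormedAddCommGroup H] [InnerProductSpace ℂ H] (T : H →L[ℂ] H) : ℝ :=
  sInf {r : ℝ | ∃ K : H →L[ℂ] H, IsCompactOperator ⇑K ∧ r = ‖T - K‖}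

/-- A Hilbert–Schmidt operator: `∑ ‖T eₙ‖² < ∞` for every orthonormal basis. -/
def IsHilbertSchmidt {H : Type} [NormedAddCommGroup H] [InnerProductSpace ℂ H]
    (T : H →L[ℂ] H) : Prop :=
  ∀ (I : Type) (b : HilbertBasis I ℂ H), Summable fun i => ‖T (b i)‖ ^ 2

/-- The `n`-th approximation number of `T` (equal to the `n`-th singular value). -/
def approxNumber {H : Type} [NormedAddCommGroup H] [InnerProductSpace ℂ H]
    (T : H →L[ℂ] H) (n : ℕ) : ℝ :=
  sInf {r : ℝ | ∃ F : H →L[ℂ] H, Module.rank ℂ (LinearMap.range (F : H →ₗ[ℂ] H)) ≤ n ∧ r = ‖T - F‖}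

/-- Membership in the Schatten class `S_p`: `T` is compact with `p`-summable singular values. -/
def MemSchatten {H : Type} [NormedAddCommGroup H] [InnerProductSpace ℂ H]
    (p : ℝ) (T : H →L[ℂ] H) : Prop :=
  IsCompactOperator ⇑T ∧ Summable fun n => approxNumber T n ^ p


/-- Key algebraic identity for the Möbius transformation. -/
lemma mobius_normSq_identity (a z : ℂ) :
    Complex.normSq (1 - (starRingEnd ℂ) a * z) - Complex.normSq (a - z)
      = (1 - Complex.normSq a) * (1 - Complex.normSq z) := by
  simp only [Complex.normSq_apply, Complex.sub_re, Complex.sub_im, Complex.one_re,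
    Complex.one_im, Complex.mul_re, Complex.mul_im, Complex.conj_re, Complex.conj_im]
  ring

/-- Pure real-arithmetic estimates for the Möbius radius. -/
lemma mobius_radius_est (A Z d s : ℝ) (hA0 : 0 ≤ A) (hA : A < 1) (hZ0 : 0 ≤ Z) (hZ : Z < 1)
    (hdl : 1 - A ≤ d) (hdu : d ≤ 1 + A) (hs0 : 0 ≤ s)
    (heq : d ^ 2 * (1 - s ^ 2) = (1 - A ^ 2) * (1 - Z ^ 2)) :
    s < 1 ∧ 1 - s ≤ 2 * (1 + A) / (1 - A) * (1 - Z) ∧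
      1 - Z ≤ 2 * (1 + A) / (1 - A) * (1 - s) := by
  have h1A : 0 < 1 - A := by linarith
  have hd0 : 0 < d := lt_of_lt_of_le h1A hdl
  have hs1 : s < 1 := by
    by_contra hcon
    push_neg at hcon
    have h1 : (0:ℝ) ≤ s ^ 2 - 1 := by nlinarith
    nlinarith [mul_nonneg (sq_nonneg d) h1,
      mul_pos (show (0:ℝ) < 1-A^2 by nlinarith) (show (0:ℝ) < 1-Z^2 by nlinarith)]
  refine ⟨hs1, ?_, ?_⟩
  · rw [div_mul_eq_mul_div, le_div_iff₀ h1A]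
    have f1 : (1-s)*(1-A)^2 ≤ (1-s^2)*(1-A)^2 := by
      nlinarith [mul_nonneg hs0 (by linarith : (0:ℝ) ≤ 1-s), sq_nonneg (1-A)]
    have f2 : (1-s^2)*(1-A)^2 ≤ (1-s^2)*d^2 := by
      have h2 : (1-A)^2 ≤ d^2 := by nlinarith
      exact mul_le_mul_of_nonneg_left h2 (by nlinarith)
    have f3 : (1-A^2)*(1-Z^2) ≤ 2*(1+A)*(1-Z)*(1-A) := by
      nlinarith [mul_le_mul_of_nonneg_left
        (show 1-Z^2 ≤ 2*(1-Z) by nlinarith [sq_nonneg (1-Z)])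
        (show (0:ℝ) ≤ 1-A^2 by nlinarith)]
    have hstep : (1-s)*(1-A) * (1-A) ≤ 2*(1+A)*(1-Z) * (1-A) := by nlinarith
    exact le_of_mul_le_mul_right hstep h1A
  · rw [div_mul_eq_mul_div, le_div_iff₀ h1A]
    have g1 : (1-Z)*(1-A^2) ≤ (1-Z^2)*(1-A^2) := by
      nlinarith [mul_nonneg (mul_nonneg (show (0:ℝ) ≤ 1-A^2 by nlinarith) hZ0)
        (show (0:ℝ) ≤ 1-Z by linarith)]
    have g3 : (1-s^2)*d^2 ≤ 2*(1-s)*d^2 := by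
      have h2 : 1-s^2 ≤ 2*(1-s) := by nlinarith [sq_nonneg (1-s)]
      nlinarith [sq_nonneg d]
    have g4 : 2*(1-s)*d^2 ≤ 2*(1-s)*(1+A)^2 := by
      have h2 : d^2 ≤ (1+A)^2 := by nlinarith
      exact mul_le_mul_of_nonneg_left h2 (by linarith)
    have hstep : (1-Z)*(1-A) * (1+A) ≤ 2*(1+A)*(1-s) * (1+A) := by nlinarith
    exact le_of_mul_le_mul_right hstep (by linarith)

/-- Comparison of weight values at comparable radii using (W1) and (W2). -/
lemma omega_comparable (ω : ℝ → ℝ) (hpos : ∀ r ∈ Set.Ico (0:ℝ) 1, 0 < ω r)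
    (hW1 : AntitoneOn ω (Set.Ico (0:ℝ) 1))
    (δ : ℝ) (hδ : 0 < δ)
    (hmono : MonotoneOn (fun r => ω r * (1 - r) ^ (-(1 + δ))) (Set.Ico (0:ℝ) 1))
    (K : ℝ) (hK : 1 ≤ K) (r s : ℝ) (hr : r ∈ Set.Ico (0:ℝ) 1) (hs : s ∈ Set.Ico (0:ℝ) 1)
    (h : 1 - s ≤ K * (1 - r)) : ω s ≤ K ^ (1 + δ) * ω r := by
  have hK1 : (1:ℝ) ≤ K ^ (1+δ) := by
    calc (1:ℝ) = 1 ^ (1+δ) := (Real.one_rpow _).symm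
    _ ≤ K ^ (1+δ) := Real.rpow_le_rpow zero_le_one hK (by linarith)
  rcases le_total r s with hc | hc
  · have h1 := hW1 hr hs hc
    nlinarith [hpos r hr]
  · have hm := hmono hs hr hc
    simp only at hm
    have h1r : 0 < 1 - r := by linarith [hr.2]
    have h1s : 0 < 1 - s := by linarith [hs.2]
    have hP : 0 < (1-s)^(1+δ) := Real.rpow_pos_of_pos h1s _
    have hQ : 0 < (1-r)^(1+δ) := Real.rpow_pos_of_pos h1r _
    rw [Real.rpow_neg h1s.le, Real.rpow_neg h1r.le] at hm
    have hPK : (1-s)^(1+δ) ≤ K^(1+δ) * (1-r)^(1+δ) := by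
      rw [← Real.mul_rpow (by linarith : (0:ℝ) ≤ K) h1r.le]
      exact Real.rpow_le_rpow h1s.le h (by linarith)
    have hωr : 0 < ω r := hpos r hr
    calc ω s = (ω s * ((1-s)^(1+δ))⁻¹) * (1-s)^(1+δ) := by field_simp
    _ ≤ (ω r * ((1-r)^(1+δ))⁻¹) * (1-s)^(1+δ) :=
        mul_le_mul_of_nonneg_right hm hP.le
    _ ≤ (ω r * ((1-r)^(1+δ))⁻¹) * (K^(1+δ) * (1-r)^(1+δ)) := by
        apply mul_le_mul_of_nonneg_left hPK
        positivity
    _ = K^(1+δ) * ω r := by field_simp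

/-- If `ω` satisfies (W1) and (W2) and `a ∈ 𝔻`, then
`(1/c) ω(z) ≤ ω(σ_a(z)) ≤ c ω(z)` for all `z ∈ 𝔻`, for some `c > 0`. -/
theorem weight_mobius_invariance
    (ω : ℝ → ℝ) (hω : IsWeight ω)
    (hW1 : AntitoneOn ω (Set.Ico (0:ℝ) 1))
    (hW2 : ∃ δ > (0:ℝ), MonotoneOn (fun r => ω r * (1 - r) ^ (-(1 + δ))) (Set.Ico (0:ℝ) 1))
    (a : ℂ) (ha : a ∈ unitDisk) :
    ∃ c > (0:ℝ), ∀ z ∈ unitDisk,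
      (1 / c) * radial ω z ≤ radial ω (mobius a z) ∧
      radial ω (mobius a z) ≤ c * radial ω z := by
  obtain ⟨δ, hδ, hmono⟩ := hW2
  have hA : ‖a‖ < 1 := by
    simpa using mem_ball_zero_iff.mp ha
  have hA0 : 0 ≤ ‖a‖ := norm_nonneg a
  have h1A : 0 < 1 - ‖a‖ := by linarith
  have hK1 : 1 ≤ 2 * (1 + ‖a‖) / (1 - ‖a‖) := by
    rw [le_div_iff₀ h1A]; nlinarith
  have hKpos : 0 < 2 * (1 + ‖a‖) / (1 - ‖a‖) :=
    lt_of_lt_of_le one_pos hK1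
  have hcpos : 0 < (2 * (1 + ‖a‖) / (1 - ‖a‖)) ^ (1+δ) :=
    Real.rpow_pos_of_pos hKpos _
  refine ⟨(2 * (1 + ‖a‖) / (1 - ‖a‖)) ^ (1+δ), hcpos, ?_⟩
  intro z hz
  simp only [radial]
  have hZ : ‖z‖ < 1 := by
    simpa using mem_ball_zero_iff.mp hz
  have hZ0 : 0 ≤ ‖z‖ := norm_nonneg z
  have habsmul : ‖(starRingEnd ℂ) a * z‖ = ‖a‖ * ‖z‖ := by
    rw [norm_mul, Complex.norm_conj]
  have hdl : 1 - ‖a‖ ≤ ‖1 - (starRingEnd ℂ) a * z‖ := by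
    have h := norm_sub_norm_le (1:ℂ) ((starRingEnd ℂ) a * z)
    simp only [habsmul, norm_one] at h
    nlinarith
  have hdu : ‖1 - (starRingEnd ℂ) a * z‖ ≤ 1 + ‖a‖ := by
    have h := norm_sub_le (1:ℂ) ((starRingEnd ℂ) a * z)
    simp only [habsmul, norm_one] at h
    nlinarith
  have hd0 : 0 < ‖1 - (starRingEnd ℂ) a * z‖ := lt_of_lt_of_le h1A hdl
  have hs0 : 0 ≤ ‖mobius a z‖ := norm_nonneg _
  have hsd : ‖mobius a z‖ * ‖1 - (starRingEnd ℂ) a * z‖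
      = ‖a - z‖ := by
    rw [mobius, norm_div]
    exact div_mul_cancel₀ _ hd0.ne'
  have heq : ‖1 - (starRingEnd ℂ) a * z‖ ^ 2 * (1 - ‖mobius a z‖ ^ 2)
      = (1 - ‖a‖ ^ 2) * (1 - ‖z‖ ^ 2) := by
    have h1 := mobius_normSq_identity a z
    rw [← Complex.sq_norm, ← Complex.sq_norm (a - z), ← Complex.sq_norm a, ← Complex.sq_norm z,
      ← hsd] at h1
    nlinarith [h1]
  obtain ⟨hs1, hupper, hlower⟩ :=
    mobius_radius_est (‖a‖) (‖z‖)
      (‖1 - (starRingEnd ℂ) a * z‖) (‖mobius a z‖)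
      hA0 hA hZ0 hZ hdl hdu hs0 heq
  have hzm : ‖z‖ ∈ Set.Ico (0:ℝ) 1 := ⟨hZ0, hZ⟩
  have hsm : ‖mobius a z‖ ∈ Set.Ico (0:ℝ) 1 := ⟨hs0, hs1⟩
  constructor
  · rw [one_div, inv_mul_le_iff₀ hcpos]
    exact omega_comparable ω hω.pos hW1 δ hδ hmono _ hK1 _ _ hsm hzm hlower
  · exact omega_comparable ω hω.pos hW1 δ hδ hmono _ hK1 _ _ hzm hsm hupper

end
end

section
/- Let ω be a weight, φ an analytic self-map of 𝔻, and f an analytic function on 𝔻 with f ∘ φ ∈ H_ω. Then ‖C_φ f‖²_{H_ω} = |f(φ(0))|² + ∫_𝔻 |f′(z)|² N_{φ,ω}(z) dA(z). -/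
open MeasureTheory Complex Metric Set Filter
open scoped ENNReal InnerProductSpace

noncomputable section

section CNFAux
open scoped Topology

private lemma countable_of_discrete_subset {C : Set ℂ}
    (h : ∀ x ∈ C, 𝓝[≠] x ⊓ 𝓟 C = ⊥) : C.Countable := by
  have hd : DiscreteTopology C := discreteTopology_subtype_iff.mpr h
  have : Countable C := countable_of_Lindelof_of_discrete
  exact Set.countable_coe_iff.mp this

private lemma exists_local_inverse (φ : ℂ → ℂ) (z : ℂ) (hz : AnalyticAt ℂ φ z)
    (hnz : deriv φ z ≠ 0) :
    ∃ (V T : Set ℂ) (ψ : ℂ → ℂ), IsOpen V ∧ z ∈ V ∧ Set.InjOn φ V ∧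
      φ '' V ⊆ T ∧ ContinuousOn ψ T ∧ ∀ x ∈ V, ψ (φ x) = x := by
  have hsd : HasStrictDerivAt φ (deriv φ z) z := by
    obtain ⟨p, hp⟩ := hz
    simpa [hp.deriv] using hp.hasStrictDerivAt
  set e' : ℂ ≃L[ℂ] ℂ := ContinuousLinearEquiv.unitsEquivAut ℂ (Units.mk0 _ hnz) with he'def
  have he' : (e' : ℂ →L[ℂ] ℂ) = (1 : ℂ →L[ℂ] ℂ).smulRight (deriv φ z) := by
    ext1
    simp [he'def, ContinuousLinearEquiv.unitsEquivAut, mul_comm]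
  have hsf : HasStrictFDerivAt φ (e' : ℂ →L[ℂ] ℂ) z := by
    rw [he']; exact hsd
  set e := hsf.toOpenPartialHomeomorph φ with hedef
  have hcoe : ⇑e = φ := hsf.toOpenPartialHomeomorph_coe
  refine ⟨e.source, e.target, e.symm, e.open_source, hsf.mem_toOpenPartialHomeomorph_source,
    ?_, ?_, e.continuousOn_symm, ?_⟩
  · have := e.injOn
    rwa [hcoe] at this
  · rw [← hcoe]; exact e.image_source_eq_target.le
  · intro x hx
    rw [← hcoe]; exact e.left_inv hx

private lemma det_mul_complex (c : ℂ) :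
    LinearMap.det ((ContinuousLinearMap.restrictScalars ℝ
      ((1 : ℂ →L[ℂ] ℂ).smulRight c)) : ℂ →ₗ[ℝ] ℂ) = ‖c‖ ^ 2 := by
  rw [← LinearMap.det_toMatrix Complex.basisOneI, Matrix.det_fin_two]
  simp only [LinearMap.toMatrix_apply, Complex.coe_basisOneI_repr]
  simp [Complex.sq_norm, Complex.normSq_apply]

private def NEfun (W : ℂ → ℝ≥0∞) (φ : ℂ → ℂ) (w : ℂ) : ℝ≥0∞ :=
  ∑' a : {a : ℂ // a ∈ unitDisk ∧ φ a = w}, W (a : ℂ)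

private lemma nev_eq_toReal (ω : ℝ → ℝ) (φ : ℂ → ℂ) (w : ℂ)
    (hpos : ∀ a ∈ unitDisk, 0 ≤ radial ω a) :
    Nevanlinna ω φ w = (NEfun (fun a => ENNReal.ofReal (radial ω a)) φ w).toReal := by
  classical
  set g : {a : ℂ // a ∈ unitDisk ∧ φ a = w} → ℝ := fun a => radial ω (a : ℂ) with hg
  have hgnn : ∀ a, 0 ≤ g a := fun a => hpos _ a.2.1
  by_cases hs : Summable g
  · rw [Nevanlinna, NEfun]
    rw [show (∑' a : {a : ℂ // a ∈ unitDisk ∧ φ a = w}, ENNReal.ofReal (radial ω (a : ℂ)))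
        = ENNReal.ofReal (∑' a, g a) from (ENNReal.ofReal_tsum_of_nonneg hgnn hs).symm]
    rw [ENNReal.toReal_ofReal (tsum_nonneg hgnn)]
  · have h1 : NEfun (fun a => ENNReal.ofReal (radial ω a)) φ w = ∞ := by
      by_contra h
      apply hs
      have h2 := ENNReal.summable_toReal h
      refine h2.congr fun a => ?_
      exact ENNReal.toReal_ofReal (hgnn a)
    rw [Nevanlinna, tsum_eq_zero_of_not_summable hs, h1, ENNReal.toReal_top]

private lemma unitDisk_isOpen : IsOpen unitDisk := Metric.isOpen_ball
private lemma unitDisk_convex : Convex ℝ unitDisk := convex_ball 0 1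
private lemma unitDisk_mem0 : (0:ℂ) ∈ unitDisk := Metric.mem_ball_self one_pos

private lemma key_cov (φ : ℂ → ℂ)
    (hφd : DifferentiableOn ℂ φ unitDisk) (hφm : Set.MapsTo φ unitDisk unitDisk)
    (G W : ℂ → ℝ≥0∞) (hG : ContinuousOn G unitDisk) (hW : ContinuousOn W unitDisk) :
    AEMeasurable (NEfun W φ) volume ∧
    ∫⁻ z in unitDisk, G (φ z) * ENNReal.ofReal (‖deriv φ z‖ ^ 2) * W z
      = ∫⁻ w, G w * NEfun W φ w := by
  classical
  have hUo := unitDisk_isOpen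
  have hUm : MeasurableSet unitDisk := hUo.measurableSet
  by_cases hconst : ∀ z ∈ unitDisk, deriv φ z = 0
  · -- φ is constant on the disk
    have hcst : ∀ z ∈ unitDisk, φ z = φ 0 := by
      intro z hz
      refine Convex.is_const_of_fderivWithin_eq_zero unitDisk_convex hφd (fun x hx => ?_) hz unitDisk_mem0
      have hxd : DifferentiableAt ℂ φ x := (hφd x hx).differentiableAt (hUo.mem_nhds hx)
      have h1 : HasDerivAt φ 0 x := by
        have := hxd.hasDerivAt
        rwa [hconst x hx] at this
      have h2 : HasFDerivAt φ ((1 : ℂ →L[ℂ] ℂ).smulRight (0:ℂ)) x := h1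
      have h3 : ((1 : ℂ →L[ℂ] ℂ).smulRight (0:ℂ)) = 0 := by ext1; simp
      rw [h3] at h2
      exact h2.hasFDerivWithinAt.fderivWithin (hUo.uniqueDiffWithinAt hx)
    have hNE0 : ∀ w, w ≠ φ 0 → NEfun W φ w = 0 := by
      intro w hw
      have : IsEmpty {a : ℂ // a ∈ unitDisk ∧ φ a = w} := by
        refine ⟨fun a => hw ?_⟩
        rw [← a.2.2, hcst _ a.2.1]
      rw [NEfun, tsum_empty]
    have hae : NEfun W φ =ᵐ[volume] 0 := by
      refine measure_mono_null (fun w hw => ?_) ((Set.countable_singleton (φ 0)).measure_zero volume)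
      simp only [Set.mem_setOf_eq, Pi.zero_apply] at hw
      by_contra h
      exact hw (hNE0 w h)
    constructor
    · exact aemeasurable_const.congr hae.symm
    · have hL : ∫⁻ z in unitDisk, G (φ z) * ENNReal.ofReal (‖deriv φ z‖ ^ 2) * W z
          = ∫⁻ _z in unitDisk, (0:ℝ≥0∞) := by
        refine setLIntegral_congr_fun hUm (fun z hz => ?_)
        rw [hconst z hz]
        simp
      have hR : (fun w => G w * NEfun W φ w) =ᵐ[volume] (fun _ => (0:ℝ≥0∞)) :=
        hae.mono fun w h => by simp only [Pi.zero_apply] at h; simp [h]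
      rw [hL, lintegral_congr_ae hR]
      simp
  · -- main case : deriv φ is not identically zero
    push_neg at hconst
    obtain ⟨z₀, hz₀U, hz₀⟩ := hconst
    have hφa : AnalyticOnNhd ℂ φ unitDisk := hφd.analyticOnNhd hUo
    have hda : AnalyticOnNhd ℂ (deriv φ) unitDisk := hφa.deriv
    set C : Set ℂ := {z | z ∈ unitDisk ∧ deriv φ z = 0} with hCdef
    have hCc : C.Countable := by
      rcases hda.eqOn_zero_or_eventually_ne_zero_of_preconnected
          unitDisk_convex.isPreconnected with h | h
      · exact absurd (h hz₀U) hz₀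
      · rw [Filter.eventually_iff, mem_codiscreteWithin] at h
        have hset : unitDisk \ {x | deriv φ x ≠ 0} = C := by
          ext z; simp [hCdef, Set.mem_diff, not_not]
        refine countable_of_discrete_subset fun x hx => ?_
        have h2 := h x hx.1
        rw [hset, disjoint_principal_right] at h2
        rw [← Filter.empty_mem_iff_bot]
        have h3 := Filter.inter_mem_inf h2 (Filter.mem_principal_self C)
        simpa [Set.compl_inter_self] using h3
    set S : Set ℂ := {z | z ∈ unitDisk ∧ deriv φ z ≠ 0} with hSdef
    have hSU : S ⊆ unitDisk := fun z hz => hz.1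
    have hSne : S.Nonempty := ⟨z₀, hz₀U, hz₀⟩
    have hloc : ∀ z : S, ∃ (V T : Set ℂ) (ψ : ℂ → ℂ), IsOpen V ∧ (z:ℂ) ∈ V ∧
        V ⊆ unitDisk ∧ Set.InjOn φ V ∧ φ '' V ⊆ T ∧ ContinuousOn ψ T ∧
        ∀ x ∈ V, ψ (φ x) = x := by
      rintro ⟨z, hzU, hznz⟩
      obtain ⟨V, T, ψ, hVo, hzV, hinj, hVT, hψc, hψ⟩ :=
        exists_local_inverse φ z (hφa z hzU) hznz
      exact ⟨V ∩ unitDisk, T, ψ, hVo.inter hUo, ⟨hzV, hzU⟩, inter_subset_right,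
        hinj.mono inter_subset_left, (Set.image_mono inter_subset_left).trans hVT, hψc,
        fun x hx => hψ x hx.1⟩
    choose V T ψ hVo hzV hVU hinj hVT hψc hψ using hloc
    obtain ⟨Tc, hTcc, hTcov⟩ := TopologicalSpace.isOpen_iUnion_countable V hVo
    have hScov : S ⊆ ⋃ z ∈ Tc, V z := by
      rw [hTcov]
      intro z hz
      exact Set.mem_iUnion.mpr ⟨⟨z, hz⟩, hzV _⟩
    have hTcne : Tc.Nonempty := by
      by_contra h
      rw [Set.not_nonempty_iff_eq_empty] at h
      obtain ⟨z, hz⟩ := hSne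
      have := hScov hz
      simp [h] at this
    obtain ⟨σ, hσ⟩ := Set.Countable.exists_eq_range hTcc hTcne
    set A : ℕ → Set ℂ := disjointed (fun n => V (σ n)) with hA
    have hAm : ∀ n, MeasurableSet (A n) :=
      MeasurableSet.disjointed (fun n => (hVo _).measurableSet)
    have hAd : Pairwise (Function.onFun Disjoint A) := disjoint_disjointed _
    have hAV : ∀ n, A n ⊆ V (σ n) := fun n => disjointed_subset _ n
    have hAU : ∀ n, A n ⊆ unitDisk := fun n => (hAV n).trans (hVU _)
    have hSA : S ⊆ ⋃ n, A n := by
      rw [hA, iUnion_disjointed]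
      intro z hz
      obtain ⟨t, ht, hzt⟩ := Set.mem_iUnion₂.mp (hScov hz)
      rw [hσ] at ht
      obtain ⟨n, rfl⟩ := ht
      exact Set.mem_iUnion.mpr ⟨n, hzt⟩
    have hφcont : ContinuousOn φ unitDisk := hφd.continuousOn
    have hAinj : ∀ n, Set.InjOn φ (A n) := fun n => (hinj _).mono (hAV n)
    have hImgM : ∀ n, MeasurableSet (φ '' A n) := fun n =>
      (hAm n).image_of_continuousOn_injOn (hφcont.mono (hAU n)) (hAinj n)
    have hImgU : ∀ n, φ '' A n ⊆ unitDisk := fun n =>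
      Set.image_subset_iff.mpr fun x hx => hφm (hAU n hx)
    have hImgT : ∀ n, φ '' A n ⊆ T (σ n) := fun n =>
      (Set.image_mono (hAV n)).trans (hVT _)
    have hψU : ∀ n, Set.MapsTo (ψ (σ n)) (φ '' A n) unitDisk := by
      rintro n _ ⟨x, hx, rfl⟩
      rw [hψ (σ n) x (hAV n hx)]
      exact hAU n hx
    -- the weight functions transported by the local inverses
    set g0 : ℕ → ℂ → ℝ≥0∞ := fun n w => W (ψ (σ n) w) with hg0
    set g : ℕ → ℂ → ℝ≥0∞ := fun n w => G w * g0 n w with hgdef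
    set Mfun : ℂ → ℝ≥0∞ := fun w => ∑' n, (φ '' A n).indicator (g0 n) w with hMdef
    have hg0cont : ∀ n, ContinuousOn (g0 n) (φ '' A n) := fun n =>
      hW.comp ((hψc (σ n)).mono (hImgT n)) (hψU n)
    have hg0m : ∀ n, AEMeasurable ((φ '' A n).indicator (g0 n)) volume := fun n =>
      (aemeasurable_indicator_iff (hImgM n)).mpr ((hg0cont n).aemeasurable (hImgM n))
    have hMm : AEMeasurable Mfun volume := AEMeasurable.ennreal_tsum hg0m
    -- pointwise identification away from the critical values
    have hpt : ∀ w, w ∉ φ '' C → Mfun w = NEfun W φ w := by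
      intro w hw
      have hPU : {a : ℂ | a ∈ unitDisk ∧ φ a = w} = ⋃ n, (A n ∩ φ ⁻¹' {w}) := by
        ext a
        constructor
        · rintro ⟨haU, haw⟩
          have haS : a ∈ S := ⟨haU, fun h0 => hw ⟨a, ⟨haU, h0⟩, haw⟩⟩
          obtain ⟨n, hn⟩ := Set.mem_iUnion.mp (hSA haS)
          exact Set.mem_iUnion.mpr ⟨n, hn, haw⟩
        · intro ha
          obtain ⟨n, haA, haw⟩ := Set.mem_iUnion.mp ha
          exact ⟨hAU n haA, haw⟩
      have hterm : ∀ n, (φ '' A n).indicator (g0 n) w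
          = ∑' a : ℂ, (A n ∩ φ ⁻¹' {w}).indicator W a := by
        intro n
        by_cases h : w ∈ φ '' A n
        · obtain ⟨a₀, ha₀A, ha₀w⟩ := h
          have hset : A n ∩ φ ⁻¹' {w} = {a₀} := by
            ext b
            constructor
            · rintro ⟨hbA, hbw⟩
              have : φ b = φ a₀ := by
                rw [Set.mem_preimage, Set.mem_singleton_iff] at hbw
                rw [hbw, ha₀w]
              exact hAinj n hbA ha₀A this
            · intro hb
              rw [Set.mem_singleton_iff] at hb
              subst hb
              refine Set.mem_inter ha₀A ?_
              rw [Set.mem_preimage, Set.mem_singleton_iff]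
              exact ha₀w
          rw [hset]
          rw [Set.indicator_of_mem (show w ∈ φ '' A n from ⟨a₀, ha₀A, ha₀w⟩)]
          rw [tsum_eq_single a₀ (fun b hb => Set.indicator_of_notMem
            (by simp [hb]) W)]
          rw [Set.indicator_of_mem (Set.mem_singleton a₀)]
          rw [hg0]
          simp only
          rw [← ha₀w, hψ (σ n) a₀ (hAV n ha₀A)]
        · rw [Set.indicator_of_notMem h]
          symm
          have hempty : A n ∩ φ ⁻¹' {w} = ∅ := by
            ext b
            simp only [Set.mem_inter_iff, Set.mem_preimage, Set.mem_singleton_iff,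
              Set.mem_empty_iff_false, iff_false, not_and]
            exact fun hbA hbw => h ⟨b, hbA, hbw⟩
          rw [hempty]
          simp
      calc Mfun w = ∑' n, ∑' a : ℂ, (A n ∩ φ ⁻¹' {w}).indicator W a := tsum_congr hterm
        _ = ∑' a : ℂ, ∑' n, (A n ∩ φ ⁻¹' {w}).indicator W a := ENNReal.tsum_comm
        _ = ∑' a : ℂ, (⋃ n, A n ∩ φ ⁻¹' {w}).indicator W a := by
            refine tsum_congr fun a => ?_
            by_cases ha : a ∈ ⋃ n, A n ∩ φ ⁻¹' {w}
            · obtain ⟨n₀, ha₀⟩ := Set.mem_iUnion.mp ha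
              rw [Set.indicator_of_mem ha]
              rw [tsum_eq_single n₀ (fun m hm => Set.indicator_of_notMem
                (fun haM => Set.disjoint_left.mp (hAd hm) haM.1 ha₀.1) W)]
              rw [Set.indicator_of_mem ha₀]
            · rw [Set.indicator_of_notMem ha]
              have : ∀ n, (A n ∩ φ ⁻¹' {w}).indicator W a = 0 := fun n =>
                Set.indicator_of_notMem (fun h => ha (Set.mem_iUnion.mpr ⟨n, h⟩)) W
              simp [this]
        _ = ∑' a : ℂ, {a : ℂ | a ∈ unitDisk ∧ φ a = w}.indicator W a := by rw [← hPU]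
        _ = NEfun W φ w := (tsum_subtype _ W).symm
    have haeMN : Mfun =ᵐ[volume] NEfun W φ := by
      refine measure_mono_null (fun w hw => ?_) ((hCc.image φ).measure_zero volume)
      simp only [Set.mem_setOf_eq] at hw
      by_contra h
      exact hw (hpt w h)
    refine ⟨hMm.congr haeMN, ?_⟩
    -- change of variables on each piece
    have hCOV : ∀ n, ∫⁻ w in φ '' A n, g n w
        = ∫⁻ z in A n, G (φ z) * ENNReal.ofReal (‖deriv φ z‖ ^ 2) * W z := by
      intro n
      have hder : ∀ x ∈ A n, HasFDerivWithinAt φ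
          (((1 : ℂ →L[ℂ] ℂ).smulRight (deriv φ x)).restrictScalars ℝ) (A n) x := by
        intro x hx
        have hxU := hAU n hx
        have hd : HasFDerivAt φ ((1 : ℂ →L[ℂ] ℂ).smulRight (deriv φ x)) x :=
          ((hφd x hxU).differentiableAt (hUo.mem_nhds hxU)).hasDerivAt
        exact (hd.restrictScalars ℝ).hasFDerivWithinAt
      rw [lintegral_image_eq_lintegral_abs_det_fderiv_mul volume (hAm n) hder (hAinj n) (g n)]
      refine setLIntegral_congr_fun (hAm n) (fun x hx => ?_)
      have hdet := det_mul_complex (deriv φ x)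
      rw [ContinuousLinearMap.coe_restrictScalars] at hdet
      rw [ContinuousLinearMap.det, ContinuousLinearMap.coe_restrictScalars, hdet]
      rw [_root_.abs_of_nonneg (by positivity)]
      rw [hgdef]
      simp only
      rw [hg0]
      simp only
      rw [hψ (σ n) x (hAV n hx)]
      ring
    -- assembling
    have hUsplit : (⋃ n, A n) ∪ (unitDisk \ ⋃ n, A n) = unitDisk :=
      Set.union_diff_cancel' le_rfl (Set.iUnion_subset hAU)
    have hdiff0 : ∫⁻ z in unitDisk \ ⋃ n, A n,
        G (φ z) * ENNReal.ofReal (‖deriv φ z‖ ^ 2) * W z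
        = ∫⁻ _z in unitDisk \ ⋃ n, A n, (0:ℝ≥0∞) := by
      refine setLIntegral_congr_fun (hUm.diff (MeasurableSet.iUnion hAm))
        (fun z hz => ?_)
      have hz0 : deriv φ z = 0 := by
        by_contra hne
        exact hz.2 (hSA ⟨hz.1, hne⟩)
      rw [hz0]
      simp
    have hLHS : ∫⁻ z in unitDisk,
        G (φ z) * ENNReal.ofReal (‖deriv φ z‖ ^ 2) * W z
        = ∑' n, ∫⁻ z in A n, G (φ z) * ENNReal.ofReal (‖deriv φ z‖ ^ 2) * W z := by
      rw [← hUsplit, lintegral_union (hUm.diff (MeasurableSet.iUnion hAm))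
        disjoint_sdiff_right, hdiff0]
      simp only [lintegral_zero, add_zero]
      exact lintegral_iUnion hAm hAd _
    have hgm : ∀ n, AEMeasurable ((φ '' A n).indicator (g n)) volume := by
      intro n
      rw [aemeasurable_indicator_iff (hImgM n)]
      exact ((hG.mono (hImgU n)).aemeasurable (hImgM n)).mul
        ((hg0cont n).aemeasurable (hImgM n))
    have hfac : ∀ n w, (φ '' A n).indicator (g n) w = G w * (φ '' A n).indicator (g0 n) w := by
      intro n w
      by_cases h : w ∈ φ '' A n
      · rw [Set.indicator_of_mem h, Set.indicator_of_mem h]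
      · rw [Set.indicator_of_notMem h, Set.indicator_of_notMem h, mul_zero]
    calc ∫⁻ z in unitDisk, G (φ z) * ENNReal.ofReal (‖deriv φ z‖ ^ 2) * W z
        = ∑' n, ∫⁻ z in A n, G (φ z) * ENNReal.ofReal (‖deriv φ z‖ ^ 2) * W z :=
          hLHS
      _ = ∑' n, ∫⁻ w in φ '' A n, g n w := by
          refine tsum_congr fun n => (hCOV n).symm
      _ = ∑' n, ∫⁻ w, (φ '' A n).indicator (g n) w := by
          refine tsum_congr fun n => (lintegral_indicator (hImgM n) _).symm
      _ = ∫⁻ w, ∑' n, (φ '' A n).indicator (g n) w := (lintegral_tsum hgm).symm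
      _ = ∫⁻ w, G w * Mfun w := by
          refine lintegral_congr fun w => ?_
          rw [hMdef]
          simp only
          rw [← ENNReal.tsum_mul_left]
          exact tsum_congr fun n => hfac n w
      _ = ∫⁻ w, G w * NEfun W φ w :=
          lintegral_congr_ae (haeMN.mono fun w h => by simp only [h])

end CNFAux

/-- If `f` is analytic on `𝔻` and `f ∘ φ ∈ H_ω`, then
`‖C_φ f‖²_{H_ω} = |f(φ(0))|² + ∫_𝔻 |f′(z)|² N_{φ,ω}(z) dA(z)`. -/
theorem composition_norm_formula
    (ω : ℝ → ℝ) (hω : IsWeight ω)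
    (φ : ℂ → ℂ) (hφd : DifferentiableOn ℂ φ unitDisk) (hφm : MapsTo φ unitDisk unitDisk)
    (f : ℂ → ℂ) (hf : DifferentiableOn ℂ f unitDisk) (hmem : memHω ω (f ∘ φ)) :
    HωNormSq ω (f ∘ φ) =
      ‖f (φ 0)‖ ^ 2 +
        ∫ z in unitDisk, ‖deriv f z‖ ^ 2 * Nevanlinna ω φ z ∂dA := by
  classical
  have hUo := unitDisk_isOpen
  have hUm : MeasurableSet unitDisk := hUo.measurableSet
  have habs : ∀ z : ℂ, z ∈ unitDisk → ‖z‖ ∈ Set.Ico (0:ℝ) 1 := by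
    intro z hz
    refine ⟨norm_nonneg z, ?_⟩
    have := mem_ball_zero_iff.mp hz
    exact this
  have hwnn : ∀ z ∈ unitDisk, 0 ≤ radial ω z := fun z hz => (hω.pos _ (habs z hz)).le
  have hωc : ContinuousOn ω (Set.Ico (0:ℝ) 1) := hω.smooth.continuousOn
  have hrad : ContinuousOn (radial ω) unitDisk :=
    hωc.comp continuous_norm.continuousOn habs
  have hfa : AnalyticOnNhd ℂ f unitDisk := hf.analyticOnNhd hUo
  have hf'c : ContinuousOn (deriv f) unitDisk := hfa.deriv.continuousOn
  set G : ℂ → ℝ≥0∞ := fun w => ENNReal.ofReal (‖deriv f w‖ ^ 2) with hGdef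
  set Wf : ℂ → ℝ≥0∞ := fun z => ENNReal.ofReal (radial ω z) with hWdef
  have hGc : ContinuousOn G unitDisk :=
    ENNReal.continuous_ofReal.comp_continuousOn
      ((continuous_norm.comp_continuousOn hf'c).pow 2)
  have hWc : ContinuousOn Wf unitDisk :=
    ENNReal.continuous_ofReal.comp_continuousOn hrad
  obtain ⟨hNEm, hkey⟩ := key_cov φ hφd hφm G Wf hGc hWc
  have hNev : ∀ w, Nevanlinna ω φ w = (NEfun Wf φ w).toReal := fun w =>
    nev_eq_toReal ω φ w hwnn
  -- reduce from dA to volume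
  have hπ0 : (ENNReal.ofReal Real.pi)⁻¹ ≠ 0 := by
    simp [ENNReal.inv_ne_zero]
  have hπt : (ENNReal.ofReal Real.pi)⁻¹ ≠ ⊤ := by
    simp [ENNReal.inv_ne_top, ENNReal.ofReal_pos, Real.pi_pos]
  have hInt : IntegrableOn (fun z => ‖deriv (f ∘ φ) z‖ ^ 2 * radial ω z)
      unitDisk volume := by
    have h2 := hmem.2
    rw [IntegrableOn, dA, Measure.restrict_smul] at h2
    exact (integrable_smul_measure hπ0 hπt).mp h2
  -- the two lintegrals over the disk agree
  have e2 : ∫⁻ z in unitDisk, ENNReal.ofReal (‖deriv (f ∘ φ) z‖ ^ 2 * radial ω z)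
      = ∫⁻ z in unitDisk, G (φ z) * ENNReal.ofReal (‖deriv φ z‖ ^ 2) * Wf z := by
    refine setLIntegral_congr_fun hUm (fun z hz => ?_)
    have hdc : deriv (f ∘ φ) z = deriv f (φ z) * deriv φ z := by
      apply deriv_comp z
      · exact (hf _ (hφm hz)).differentiableAt (hUo.mem_nhds (hφm hz))
      · exact (hφd _ hz).differentiableAt (hUo.mem_nhds hz)
    rw [hdc, norm_mul, mul_pow, ENNReal.ofReal_mul (by positivity),
      ENNReal.ofReal_mul (by positivity)]
  have e4 : ∫⁻ w, G w * NEfun Wf φ w = ∫⁻ w in unitDisk, G w * NEfun Wf φ w := by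
    rw [← lintegral_indicator hUm]
    refine lintegral_congr fun w => ?_
    by_cases hw : w ∈ unitDisk
    · rw [Set.indicator_of_mem hw]
    · rw [Set.indicator_of_notMem hw]
      have : IsEmpty {a : ℂ // a ∈ unitDisk ∧ φ a = w} :=
        ⟨fun a => hw (a.2.2 ▸ hφm a.2.1)⟩
      rw [NEfun, tsum_empty, mul_zero]
  have hfin : ∫⁻ w in unitDisk, G w * NEfun Wf φ w ≠ ⊤ := by
    rw [← e4, ← hkey, ← e2]
    refine ((lintegral_ofReal_le_lintegral_enorm _).trans_lt ?_).ne
    exact hInt.2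
  have hNEr : AEMeasurable (NEfun Wf φ) (volume.restrict unitDisk) := hNEm.restrict
  have hGr : AEMeasurable G (volume.restrict unitDisk) := hGc.aemeasurable hUm
  have hae_fin : ∀ᵐ w ∂(volume.restrict unitDisk), G w * NEfun Wf φ w < ⊤ :=
    ae_lt_top' (hGr.mul hNEr) hfin
  have hptw : ∀ᵐ w ∂(volume.restrict unitDisk),
      ENNReal.ofReal (‖deriv f w‖ ^ 2 * Nevanlinna ω φ w)
        = G w * NEfun Wf φ w := by
    filter_upwards [hae_fin] with w hw
    rcases eq_top_or_lt_top (NEfun Wf φ w) with h | h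
    · have hG0 : G w = 0 := by
        by_contra h0
        rw [h, ENNReal.mul_top h0] at hw
        exact absurd hw (lt_irrefl _)
      have habs0 : ‖deriv f w‖ ^ 2 = 0 := by
        have := hG0
        rw [hGdef] at this
        simp only [ENNReal.ofReal_eq_zero] at this
        exact le_antisymm this (by positivity)
      rw [habs0, zero_mul, ENNReal.ofReal_zero, hG0, zero_mul]
    · rw [hNev w, ENNReal.ofReal_mul (by positivity), ENNReal.ofReal_toReal h.ne]
  have hnn1 : 0 ≤ᵐ[volume.restrict unitDisk]
      fun z => ‖deriv (f ∘ φ) z‖ ^ 2 * radial ω z :=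
    (ae_restrict_mem hUm).mono fun z hz => mul_nonneg (by positivity) (hwnn z hz)
  have e1 : ∫ z in unitDisk, ‖deriv (f ∘ φ) z‖ ^ 2 * radial ω z ∂volume
      = (∫⁻ z in unitDisk,
          ENNReal.ofReal (‖deriv (f ∘ φ) z‖ ^ 2 * radial ω z)).toReal :=
    integral_eq_lintegral_of_nonneg_ae hnn1 hInt.aestronglyMeasurable
  have hnn2 : 0 ≤ᵐ[volume.restrict unitDisk]
      fun w => ‖deriv f w‖ ^ 2 * Nevanlinna ω φ w :=
    Filter.Eventually.of_forall fun w => mul_nonneg (by positivity)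
      (by rw [hNev w]; exact ENNReal.toReal_nonneg)
  have hmeas2 : AEStronglyMeasurable
      (fun w => ‖deriv f w‖ ^ 2 * Nevanlinna ω φ w)
      (volume.restrict unitDisk) := by
    have h1 : AEMeasurable (fun w => ‖deriv f w‖ ^ 2 * (NEfun Wf φ w).toReal)
        (volume.restrict unitDisk) := by
      refine AEMeasurable.mul ?_ (ENNReal.measurable_toReal.comp_aemeasurable hNEr)
      exact ((continuous_norm.comp_continuousOn hf'c).pow 2).aemeasurable hUm
    have h2 : (fun w => ‖deriv f w‖ ^ 2 * Nevanlinna ω φ w)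
        = fun w => ‖deriv f w‖ ^ 2 * (NEfun Wf φ w).toReal := by
      funext w
      rw [hNev w]
    rw [h2]
    exact h1.aestronglyMeasurable
  have e5 : ∫ w in unitDisk, ‖deriv f w‖ ^ 2 * Nevanlinna ω φ w ∂volume
      = (∫⁻ w in unitDisk,
          ENNReal.ofReal (‖deriv f w‖ ^ 2 * Nevanlinna ω φ w)).toReal :=
    integral_eq_lintegral_of_nonneg_ae hnn2 hmeas2
  have hIvol : ∫ z in unitDisk, ‖deriv (f ∘ φ) z‖ ^ 2 * radial ω z ∂volume
      = ∫ w in unitDisk, ‖deriv f w‖ ^ 2 * Nevanlinna ω φ w ∂volume := by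
    rw [e1, e5, e2, hkey, e4, lintegral_congr_ae hptw]
  have hI : ∫ z in unitDisk, ‖deriv (f ∘ φ) z‖ ^ 2 * radial ω z ∂dA
      = ∫ w in unitDisk, ‖deriv f w‖ ^ 2 * Nevanlinna ω φ w ∂dA := by
    rw [dA, Measure.restrict_smul, integral_smul_measure, integral_smul_measure, hIvol]
  rw [HωNormSq, Function.comp_apply, hI]

end
end

section
/- Let ω be an admissible weight, let φ be an analytic self-map of 𝔻 with a = φ(0) ≠ 0, and set ψ = σ_a ∘ φ. Then the following are equivalent: (i) there exists c > 0 such that ∫_𝔻 |f′(z)|² (N_{φ,ω}(z)/ω(z)) ω(z) dA(z) ≥ c ∫_𝔻 |f′(z)|² ω(z) dA(z) for all f ∈ H_ω; (ii) there exists c > 0 such that ∫_𝔻 |f′(z)|² (N_{ψ,ω}(z)/ω(z)) ω(z) dA(z) ≥ c ∫_𝔻 |f′(z)|² ω(z) dA(z) for all f ∈ H_ω. -/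
open MeasureTheory Complex Metric Set Filter
open scoped ENNReal InnerProductSpace

noncomputable section

namespace CR

def mder (a z : ℂ) : ℂ := ((starRingEnd ℂ) a * a - 1) / (1 - (starRingEnd ℂ) a * z) ^ 2

lemma mem_unitDisk {z : ℂ} : z ∈ unitDisk ↔ ‖z‖ < 1 := by
  simp [unitDisk, mem_ball_zero_iff]

lemma measurableSet_unitDisk : MeasurableSet unitDisk := measurableSet_ball

lemma denom_ne {a z : ℂ} (ha : ‖a‖ < 1) (hz : ‖z‖ ≤ 1) :
    1 - (starRingEnd ℂ) a * z ≠ 0 := by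
  intro h
  have h1 : (starRingEnd ℂ) a * z = 1 := by linear_combination -h
  have := congrArg (‖·‖) h1
  rw [norm_mul, Complex.norm_conj, norm_one] at this
  nlinarith [norm_nonneg a, norm_nonneg z]

lemma normSq_identity (a z : ℂ) :
    Complex.normSq (1 - (starRingEnd ℂ) a * z) - Complex.normSq (a - z)
      = (1 - Complex.normSq a) * (1 - Complex.normSq z) := by
  simp only [Complex.normSq_apply, Complex.sub_re, Complex.sub_im, Complex.mul_re,
    Complex.mul_im, Complex.one_re, Complex.one_im, Complex.conj_re, Complex.conj_im]
  ring

lemma normSq_lt_one {z : ℂ} (h : ‖z‖ < 1) : Complex.normSq z < 1 := by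
  rw [← Complex.sq_norm]; nlinarith [norm_nonneg z]

lemma abs_lt_one_of_normSq {z : ℂ} (h : Complex.normSq z < 1) : ‖z‖ < 1 := by
  nlinarith [Complex.sq_norm z, norm_nonneg z]

lemma mobius_mem {a z : ℂ} (ha : ‖a‖ < 1) (hz : ‖z‖ < 1) :
    ‖mobius a z‖ < 1 := by
  have hd := denom_ne ha hz.le
  have hdq : 0 < Complex.normSq (1 - (starRingEnd ℂ) a * z) := by
    rwa [Complex.normSq_pos]
  apply abs_lt_one_of_normSq
  rw [mobius, Complex.normSq_div, div_lt_one hdq]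
  nlinarith [normSq_identity a z, normSq_lt_one ha, normSq_lt_one hz]

lemma mobius_mobius {a z : ℂ} (ha : ‖a‖ < 1) (hz : ‖z‖ < 1) :
    mobius a (mobius a z) = z := by
  have hd := denom_ne ha hz.le
  have ha2 : 1 - (starRingEnd ℂ) a * a ≠ 0 := denom_ne ha ha.le
  have key : 1 - (starRingEnd ℂ) a * mobius a z
      = (1 - (starRingEnd ℂ) a * a) / (1 - (starRingEnd ℂ) a * z) := by
    rw [mobius]; field_simp; ring
  rw [mobius, key, mobius, div_eq_iff (div_ne_zero ha2 hd)]
  have hd' : 1 - z * (starRingEnd ℂ) a ≠ 0 := by rwa [mul_comm]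
  field_simp
  ring

lemma hasDerivAt_mobius {a z : ℂ} (hd : 1 - (starRingEnd ℂ) a * z ≠ 0) :
    HasDerivAt (mobius a) (mder a z) z := by
  have h1 : HasDerivAt (fun w : ℂ => a - w) (-1) z := by
    simpa using (hasDerivAt_id z).const_sub a
  have h2 : HasDerivAt (fun w : ℂ => 1 - (starRingEnd ℂ) a * w) (-((starRingEnd ℂ) a)) z := by
    simpa using ((hasDerivAt_id z).const_mul ((starRingEnd ℂ) a)).const_sub 1
  have := h1.div h2 hd
  refine this.congr_deriv ?_
  unfold mder
  field_simp
  ring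



lemma det_restrict (d : ℂ) :
    ((ContinuousLinearMap.smulRight (1 : ℂ →L[ℂ] ℂ) d).restrictScalars ℝ).det
      = Complex.normSq d := by
  have h1 : (((ContinuousLinearMap.smulRight (1 : ℂ →L[ℂ] ℂ) d).restrictScalars ℝ)
      : ℂ →ₗ[ℝ] ℂ) = Algebra.lmul ℝ ℂ d := by
    ext z
    simp [mul_comm]
  rw [ContinuousLinearMap.det, h1, ← Algebra.norm_apply, Algebra.norm_complex_apply]

lemma mobius_image {a : ℂ} (ha : ‖a‖ < 1) : mobius a '' unitDisk = unitDisk := by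
  apply Subset.antisymm
  · rintro _ ⟨z, hz, rfl⟩
    exact mem_unitDisk.2 (mobius_mem ha (mem_unitDisk.1 hz))
  · intro z hz
    exact ⟨mobius a z, mem_unitDisk.2 (mobius_mem ha (mem_unitDisk.1 hz)),
      mobius_mobius ha (mem_unitDisk.1 hz)⟩

lemma mobius_injOn {a : ℂ} (ha : ‖a‖ < 1) : InjOn (mobius a) unitDisk := by
  intro x hx y hy h
  have := congrArg (mobius a) h
  rwa [mobius_mobius ha (mem_unitDisk.1 hx), mobius_mobius ha (mem_unitDisk.1 hy)] at this

lemma mobius_hasFDerivWithinAt {a : ℂ} (ha : ‖a‖ < 1) :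
    ∀ x ∈ unitDisk, HasFDerivWithinAt (mobius a)
      ((ContinuousLinearMap.smulRight (1 : ℂ →L[ℂ] ℂ) (mder a x)).restrictScalars ℝ)
      unitDisk x := fun x hx =>
  ((hasDerivAt_mobius (denom_ne ha (mem_unitDisk.1 hx).le)).hasFDerivAt.restrictScalars
    ℝ).hasFDerivWithinAt

lemma cov {a : ℂ} (ha : ‖a‖ < 1) (F : ℂ → ℝ) :
    ∫ z in unitDisk, F z = ∫ w in unitDisk, ‖mder a w‖ ^ 2 * F (mobius a w) := by
  conv_lhs => rw [← mobius_image ha]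
  rw [integral_image_eq_integral_abs_det_fderiv_smul volume (show MeasurableSet unitDisk from measurableSet_ball)
    (mobius_hasFDerivWithinAt ha) (mobius_injOn ha) F]
  refine setIntegral_congr_fun (show MeasurableSet unitDisk from measurableSet_ball) fun w _ => ?_
  rw [det_restrict, _root_.abs_of_nonneg (Complex.normSq_nonneg _), ← Complex.sq_norm, smul_eq_mul]

lemma cov_integrableOn {a : ℂ} (ha : ‖a‖ < 1) {F : ℂ → ℝ}
    (hF : IntegrableOn F unitDisk volume) :
    IntegrableOn (fun w => ‖mder a w‖ ^ 2 * F (mobius a w)) unitDisk volume := by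
  have := (integrableOn_image_iff_integrableOn_abs_det_fderiv_smul volume (show MeasurableSet unitDisk from measurableSet_ball)
    (mobius_hasFDerivWithinAt ha) (mobius_injOn ha) F).1 (by rwa [mobius_image ha])
  refine this.congr_fun (fun w _ => ?_) (show MeasurableSet unitDisk from measurableSet_ball)
  dsimp only
  rw [det_restrict, _root_.abs_of_nonneg (Complex.normSq_nonneg _), ← Complex.sq_norm, smul_eq_mul]



lemma radial_pos {ω : ℝ → ℝ} (hω : IsWeight ω) {z : ℂ} (hz : z ∈ unitDisk) :
    0 < radial ω z :=
  hω.pos _ ⟨norm_nonneg z, mem_unitDisk.1 hz⟩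

/-- Key distortion estimate: `1 - |σ_a z| ≤ R * (1 - |z|)` on the disk. -/
lemma one_sub_abs_mobius_le {a z : ℂ} (ha : ‖a‖ < 1) (hz : ‖z‖ < 1) :
    1 - ‖mobius a z‖
      ≤ (2 * (1 + ‖a‖) / (1 - ‖a‖)) * (1 - ‖z‖) := by
  set s := ‖mobius a z‖ with hs
  set t := ‖z‖ with ht
  have hs1 : s < 1 := mobius_mem ha hz
  have hs0 : 0 ≤ s := norm_nonneg _
  have ht0 : 0 ≤ t := norm_nonneg _
  have ha0 : 0 ≤ ‖a‖ := norm_nonneg _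
  -- normSq of denominator is at least (1-|a|)^2
  have hd1 : (1 - ‖a‖) ≤ ‖1 - (starRingEnd ℂ) a * z‖ := by
    calc 1 - ‖a‖ ≤ 1 - ‖(starRingEnd ℂ) a * z‖ := by
          rw [norm_mul, Complex.norm_conj]; nlinarith
      _ ≤ ‖1 - (starRingEnd ℂ) a * z‖ := by
          have := norm_sub_norm_le (1:ℂ) ((starRingEnd ℂ) a * z)
          simpa using this
  have hdsq : (1 - ‖a‖) ^ 2 ≤ Complex.normSq (1 - (starRingEnd ℂ) a * z) := by
    rw [← Complex.sq_norm]
    have h1a : 0 ≤ 1 - ‖a‖ := by linarith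
    nlinarith
  -- 1 - s² = (1-|a|²)(1-|z|²)/normSq(denom)
  have hkey : (1 - s ^ 2) * Complex.normSq (1 - (starRingEnd ℂ) a * z)
      = (1 - Complex.normSq a) * (1 - Complex.normSq z) := by
    have hd0 : Complex.normSq (1 - (starRingEnd ℂ) a * z) ≠ 0 :=
      (Complex.normSq_pos.2 (denom_ne ha hz.le)).ne'
    have : s ^ 2 = Complex.normSq (a - z) / Complex.normSq (1 - (starRingEnd ℂ) a * z) := by
      rw [hs, Complex.sq_norm, mobius, Complex.normSq_div]
    rw [this, sub_mul, div_mul_cancel₀ _ hd0]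
    linarith [normSq_identity a z]
  have hnsa : Complex.normSq a = ‖a‖ ^ 2 := (Complex.sq_norm a).symm
  have hnsz : Complex.normSq z = t ^ 2 := (Complex.sq_norm z).symm
  -- conclude
  have hRpos : 0 < 1 - ‖a‖ := by linarith
  rw [div_mul_eq_mul_div, le_div_iff₀ hRpos, ← mul_le_mul_iff_left₀ hRpos]
  set N := Complex.normSq (1 - (starRingEnd ℂ) a * z) with hN
  set A := ‖a‖ with hA
  have hs2 : 0 ≤ 1 - s ^ 2 := by nlinarith
  have e1 : 1 - s ≤ 1 - s ^ 2 := by nlinarith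
  have e2 : (1 - s ^ 2) * (1 - A) ^ 2 ≤ (1 - s ^ 2) * N :=
    mul_le_mul_of_nonneg_left hdsq hs2
  have hA2 : 0 ≤ 1 - A ^ 2 := by nlinarith
  have f1 : (1 - t ^ 2) ≤ 2 * (1 - t) := by nlinarith
  have f2 : (1 - A ^ 2) * (1 - t ^ 2) ≤ (1 - A ^ 2) * (2 * (1 - t)) :=
    mul_le_mul_of_nonneg_left f1 hA2
  have f3 : (1 - s) * (1 - A) ^ 2 ≤ (1 - s ^ 2) * (1 - A) ^ 2 :=
    mul_le_mul_of_nonneg_right e1 (sq_nonneg _)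
  nlinarith [f3, e2, hkey, f2]

/-- The weight comparison: `ω(|σ_a z|) ≤ K ω(|z|)` on the disk. -/
lemma radial_ratio {ω : ℝ → ℝ} (hω : IsAdmissibleWeight ω) {a : ℂ} (ha : ‖a‖ < 1) :
    ∃ K : ℝ, 1 ≤ K ∧ ∀ z ∈ unitDisk, radial ω (mobius a z) ≤ K * radial ω z := by
  obtain ⟨δ, hδ, hmono⟩ := hω.W2
  set R : ℝ := 2 * (1 + ‖a‖) / (1 - ‖a‖) with hR
  have ha0 : 0 ≤ ‖a‖ := norm_nonneg _
  have hRone : 1 ≤ R := by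
    rw [hR, le_div_iff₀ (by linarith)]
    linarith
  refine ⟨R ^ (1 + δ), Real.one_le_rpow hRone (by linarith), fun z hz => ?_⟩
  have hz1 : ‖z‖ < 1 := mem_unitDisk.1 hz
  set s := ‖mobius a z‖ with hs
  set t := ‖z‖ with ht
  have hs1 : s < 1 := mobius_mem ha hz1
  have hsm : s ∈ Set.Ico (0:ℝ) 1 := ⟨norm_nonneg _, hs1⟩
  have htm : t ∈ Set.Ico (0:ℝ) 1 := ⟨norm_nonneg _, hz1⟩
  have hK1 : (1:ℝ) ≤ R ^ (1 + δ) := Real.one_le_rpow hRone (by linarith)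
  have hωt : 0 < ω t := hω.pos t htm
  show ω s ≤ R ^ (1 + δ) * ω t
  rcases le_or_gt t s with hts | hst
  · calc ω s ≤ ω t := hω.W1 htm hsm hts
      _ ≤ R ^ (1 + δ) * ω t := le_mul_of_one_le_left hωt.le hK1
  · -- s < t : use W2
    have h2 := hmono hsm htm hst.le
    simp only at h2
    have h1s : 0 < 1 - s := by linarith
    have h1t : 0 < 1 - t := by linarith
    have hratio : (1 - s) / (1 - t) ≤ R := by
      rw [div_le_iff₀ h1t]
      have := one_sub_abs_mobius_le ha hz1
      rw [← hs, ← ht] at this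
      linarith [this]
    have hrpos : 0 < (1 - s) / (1 - t) := div_pos h1s h1t
    -- from h2: ω s ≤ ω t * ((1-s)/(1-t))^(1+δ)
    have step : ω s ≤ ω t * ((1 - s) / (1 - t)) ^ (1 + δ) := by
      have e1 : ω s = ω s * (1 - s) ^ (-(1 + δ)) * (1 - s) ^ (1 + δ) := by
        rw [mul_assoc, ← Real.rpow_add h1s, neg_add_cancel, Real.rpow_zero, mul_one]
      rw [e1]
      calc ω s * (1 - s) ^ (-(1 + δ)) * (1 - s) ^ (1 + δ)
          ≤ ω t * (1 - t) ^ (-(1 + δ)) * (1 - s) ^ (1 + δ) := by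
            apply mul_le_mul_of_nonneg_right h2 (Real.rpow_nonneg h1s.le _)
        _ = ω t * ((1 - s) / (1 - t)) ^ (1 + δ) := by
            rw [Real.div_rpow h1s.le h1t.le, Real.rpow_neg h1t.le]
            ring
    calc ω s ≤ ω t * ((1 - s) / (1 - t)) ^ (1 + δ) := step
      _ ≤ ω t * R ^ (1 + δ) := by
          exact mul_le_mul_of_nonneg_left
            (Real.rpow_le_rpow hrpos.le hratio (by linarith)) hωt.le
      _ = R ^ (1 + δ) * ω t := mul_comm _ _

lemma dA_restrict (s : Set ℂ) :
    dA.restrict s = (ENNReal.ofReal Real.pi)⁻¹ • (volume.restrict s) := by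
  rw [dA, Measure.restrict_smul]

lemma integral_dA (F : ℂ → ℝ) (s : Set ℂ) :
    ∫ z in s, F z ∂dA = ((ENNReal.ofReal Real.pi)⁻¹).toReal * ∫ z in s, F z := by
  rw [dA_restrict, integral_smul_measure, smul_eq_mul]

lemma pi_inv_ne_zero : (ENNReal.ofReal Real.pi)⁻¹ ≠ 0 :=
  ENNReal.inv_ne_zero.2 ENNReal.ofReal_ne_top

lemma pi_inv_ne_top : (ENNReal.ofReal Real.pi)⁻¹ ≠ ∞ :=
  ENNReal.inv_ne_top.2 (ENNReal.ofReal_pos.2 Real.pi_pos).ne'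

lemma kappa_pos : 0 < ((ENNReal.ofReal Real.pi)⁻¹).toReal :=
  ENNReal.toReal_pos pi_inv_ne_zero pi_inv_ne_top

lemma integrableOn_dA_iff {F : ℂ → ℝ} {s : Set ℂ} :
    IntegrableOn F s dA ↔ IntegrableOn F s volume := by
  rw [IntegrableOn, dA_restrict, integrable_smul_measure pi_inv_ne_zero pi_inv_ne_top]
  rfl


lemma isOpen_unitDisk : IsOpen unitDisk := isOpen_ball

/-- The Nevanlinna counting function identity under post-composition with `σ_a`. -/
lemma nev_eq {ω : ℝ → ℝ} {a : ℂ} (ha : ‖a‖ < 1) {χ₁ χ₂ : ℂ → ℂ}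
    (h1m : MapsTo χ₁ unitDisk unitDisk)
    (hrel : ∀ w ∈ unitDisk, χ₂ w = mobius a (χ₁ w)) {z : ℂ} (hz : z ∈ unitDisk) :
    Nevanlinna ω χ₂ z = Nevanlinna ω χ₁ (mobius a z) := by
  have e : ∀ w : ℂ, (w ∈ unitDisk ∧ χ₂ w = z) ↔ (w ∈ unitDisk ∧ χ₁ w = mobius a z) := by
    intro w
    constructor
    · rintro ⟨hw, h⟩
      refine ⟨hw, ?_⟩
      rw [← h, hrel w hw, mobius_mobius ha (mem_unitDisk.1 (h1m hw))]
    · rintro ⟨hw, h⟩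
      refine ⟨hw, ?_⟩
      rw [hrel w hw, h, mobius_mobius ha (mem_unitDisk.1 hz)]
  unfold Nevanlinna
  rw [← Equiv.tsum_eq (Equiv.subtypeEquivRight e)
    (fun b : {w : ℂ // w ∈ unitDisk ∧ χ₁ w = mobius a z} => radial ω (b : ℂ))]
  exact tsum_congr fun b => rfl

lemma deriv_comp_mobius {f : ℂ → ℂ} (hf : DifferentiableOn ℂ f unitDisk) {a : ℂ}
    (ha : ‖a‖ < 1) {w : ℂ} (hw : w ∈ unitDisk) :
    deriv (fun z => f (mobius a z)) w = deriv f (mobius a w) * mder a w := by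
  have h1 : HasDerivAt (mobius a) (mder a w) w :=
    hasDerivAt_mobius (denom_ne ha (mem_unitDisk.1 hw).le)
  have hmem : mobius a w ∈ unitDisk := mem_unitDisk.2 (mobius_mem ha (mem_unitDisk.1 hw))
  have h2 : HasDerivAt f (deriv f (mobius a w)) (mobius a w) :=
    (hf.differentiableAt (isOpen_unitDisk.mem_nhds hmem)).hasDerivAt
  exact (h2.comp w h1).deriv

lemma diffOn_comp_mobius {f : ℂ → ℂ} (hf : DifferentiableOn ℂ f unitDisk) {a : ℂ}
    (ha : ‖a‖ < 1) :
    DifferentiableOn ℂ (fun z => f (mobius a z)) unitDisk := by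
  intro w hw
  have h1 : HasDerivAt (mobius a) (mder a w) w :=
    hasDerivAt_mobius (denom_ne ha (mem_unitDisk.1 hw).le)
  have hmem : mobius a w ∈ unitDisk := mem_unitDisk.2 (mobius_mem ha (mem_unitDisk.1 hw))
  have h2 : HasDerivAt f (deriv f (mobius a w)) (mobius a w) :=
    (hf.differentiableAt (isOpen_unitDisk.mem_nhds hmem)).hasDerivAt
  exact ((h2.comp w h1).differentiableAt).differentiableWithinAt

lemma aesm_weighted_deriv {ω : ℝ → ℝ} (hω : IsAdmissibleWeight ω) {g : ℂ → ℂ}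
    (hg : DifferentiableOn ℂ g unitDisk) :
    AEStronglyMeasurable (fun z => ‖deriv g z‖ ^ 2 * radial ω z)
      (volume.restrict unitDisk) := by
  apply ContinuousOn.aestronglyMeasurable _ measurableSet_unitDisk
  apply ContinuousOn.mul
  · have : ContinuousOn (deriv g) unitDisk :=
      ((hg.analyticOnNhd isOpen_unitDisk).deriv).continuousOn
    exact (this.norm.congr (fun z _ => rfl)).pow 2
  · have : ContinuousOn ω (Set.Ico (0:ℝ) 1) := hω.smooth.continuousOn
    exact this.comp continuous_norm.continuousOn
      (fun z hz => ⟨norm_nonneg z, mem_unitDisk.1 hz⟩)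

/-- `g = f ∘ σ_a` belongs to `H_ω` if `f` does. -/
lemma memHω_comp {ω : ℝ → ℝ} (hω : IsAdmissibleWeight ω) {f : ℂ → ℂ} (hf : memHω ω f)
    {a : ℂ} (ha : ‖a‖ < 1) :
    memHω ω (fun z => f (mobius a z)) := by
  obtain ⟨K, hK1, hK⟩ := radial_ratio hω ha
  refine ⟨diffOn_comp_mobius hf.1 ha, ?_⟩
  rw [integrableOn_dA_iff]
  have hbase : IntegrableOn (fun z => ‖deriv f z‖ ^ 2 * radial ω z)
      unitDisk volume := integrableOn_dA_iff.1 hf.2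
  have hcov := cov_integrableOn ha hbase
  have hKcov : IntegrableOn
      (fun w => K * (‖mder a w‖ ^ 2 *
        (‖deriv f (mobius a w)‖ ^ 2 * radial ω (mobius a w)))) unitDisk volume :=
    hcov.const_mul K
  apply Integrable.mono' hKcov (aesm_weighted_deriv hω (diffOn_comp_mobius hf.1 ha))
  filter_upwards [ae_restrict_mem measurableSet_unitDisk] with w hw
  have hchain := deriv_comp_mobius hf.1 ha hw
  have hσw : mobius a w ∈ unitDisk := mem_unitDisk.2 (mobius_mem ha (mem_unitDisk.1 hw))
  have hback : radial ω w ≤ K * radial ω (mobius a w) := by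
    have := hK (mobius a w) hσw
    rwa [mobius_mobius ha (mem_unitDisk.1 hw)] at this
  have h0 : 0 ≤ radial ω w := (radial_pos hω.toIsWeight hw).le
  rw [Real.norm_eq_abs, _root_.abs_of_nonneg (by positivity)]
  calc ‖deriv (fun z => f (mobius a z)) w‖ ^ 2 * radial ω w
      = ‖deriv f (mobius a w)‖ ^ 2 * ‖mder a w‖ ^ 2 * radial ω w := by
        rw [hchain, norm_mul, mul_pow]
    _ ≤ ‖deriv f (mobius a w)‖ ^ 2 * ‖mder a w‖ ^ 2 *
          (K * radial ω (mobius a w)) := by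
        apply mul_le_mul_of_nonneg_left hback (by positivity)
    _ = K * (‖mder a w‖ ^ 2 *
          (‖deriv f (mobius a w)‖ ^ 2 * radial ω (mobius a w))) := by ring


end CR

namespace CR2
open CR

lemma int_nev (ω : ℝ → ℝ) (hω : IsAdmissibleWeight ω) (χ : ℂ → ℂ) (f : ℂ → ℂ) :
    ∫ z in unitDisk,
        ‖deriv f z‖ ^ 2 * (Nevanlinna ω χ z / radial ω z) * radial ω z ∂dA
      = ∫ z in unitDisk, ‖deriv f z‖ ^ 2 * Nevanlinna ω χ z ∂dA := by
  refine setIntegral_congr_fun measurableSet_unitDisk fun z hz => ?_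
  rw [mul_assoc, div_mul_cancel₀ _ (radial_pos hω.toIsWeight hz).ne']

lemma master (ω : ℝ → ℝ) (hω : IsAdmissibleWeight ω) (a : ℂ) (ha : ‖a‖ < 1)
    (χ₁ χ₂ : ℂ → ℂ) (h1m : MapsTo χ₁ unitDisk unitDisk)
    (hrel : ∀ w ∈ unitDisk, χ₂ w = mobius a (χ₁ w))
    (H : ∃ c > (0:ℝ), ∀ f : ℂ → ℂ, memHω ω f →
        (∫ z in unitDisk,
            ‖deriv f z‖ ^ 2 * (Nevanlinna ω χ₁ z / radial ω z) * radial ω z ∂dA) ≥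
          c * ∫ z in unitDisk, ‖deriv f z‖ ^ 2 * radial ω z ∂dA) :
    ∃ c > (0:ℝ), ∀ f : ℂ → ℂ, memHω ω f →
        (∫ z in unitDisk,
            ‖deriv f z‖ ^ 2 * (Nevanlinna ω χ₂ z / radial ω z) * radial ω z ∂dA) ≥
          c * ∫ z in unitDisk, ‖deriv f z‖ ^ 2 * radial ω z ∂dA := by
  obtain ⟨c, hc, hmain⟩ := H
  obtain ⟨K, hK1, hK⟩ := radial_ratio hω ha
  have hK0 : (0:ℝ) < K := lt_of_lt_of_le one_pos hK1
  refine ⟨c / K, div_pos hc hK0, fun f hf => ?_⟩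
  set g : ℂ → ℂ := fun z => f (mobius a z) with hgdef
  have hg : memHω ω g := memHω_comp hω hf ha
  set κ : ℝ := ((ENNReal.ofReal Real.pi)⁻¹).toReal with hκ
  -- Equality of the Nevanlinna integrals
  have key1 : (∫ z in unitDisk, ‖deriv f z‖ ^ 2 * Nevanlinna ω χ₂ z ∂dA)
      = ∫ w in unitDisk, ‖deriv g w‖ ^ 2 * Nevanlinna ω χ₁ w ∂dA := by
    rw [integral_dA, integral_dA]
    congr 1
    calc (∫ z in unitDisk, ‖deriv f z‖ ^ 2 * Nevanlinna ω χ₂ z)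
        = ∫ z in unitDisk, ‖deriv f z‖ ^ 2 * Nevanlinna ω χ₁ (mobius a z) := by
          refine setIntegral_congr_fun measurableSet_unitDisk fun z hz => ?_
          rw [nev_eq ha h1m hrel hz]
      _ = ∫ w in unitDisk, ‖mder a w‖ ^ 2 *
            (‖deriv f (mobius a w)‖ ^ 2 *
              Nevanlinna ω χ₁ (mobius a (mobius a w))) :=
          cov ha (fun z => ‖deriv f z‖ ^ 2 * Nevanlinna ω χ₁ (mobius a z))
      _ = ∫ w in unitDisk, ‖deriv g w‖ ^ 2 * Nevanlinna ω χ₁ w := by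
          refine setIntegral_congr_fun measurableSet_unitDisk fun w hw => ?_
          rw [mobius_mobius ha (mem_unitDisk.1 hw), hgdef,
            deriv_comp_mobius hf.1 ha hw, norm_mul, mul_pow]
          ring
  -- Comparison of the energies
  have key2 : (∫ z in unitDisk, ‖deriv f z‖ ^ 2 * radial ω z ∂dA)
      ≤ K * ∫ w in unitDisk, ‖deriv g w‖ ^ 2 * radial ω w ∂dA := by
    rw [integral_dA, integral_dA, ← mul_assoc, mul_comm K κ, mul_assoc]
    apply mul_le_mul_of_nonneg_left _ kappa_pos.le
    calc (∫ z in unitDisk, ‖deriv f z‖ ^ 2 * radial ω z)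
        = ∫ w in unitDisk, ‖mder a w‖ ^ 2 *
            (‖deriv f (mobius a w)‖ ^ 2 * radial ω (mobius a w)) :=
          cov ha (fun z => ‖deriv f z‖ ^ 2 * radial ω z)
      _ ≤ ∫ w in unitDisk, K * (‖deriv g w‖ ^ 2 * radial ω w) := by
          apply integral_mono_of_nonneg
          · filter_upwards [ae_restrict_mem measurableSet_unitDisk] with w hw
            have hσw : mobius a w ∈ unitDisk :=
              mem_unitDisk.2 (mobius_mem ha (mem_unitDisk.1 hw))
            have := (radial_pos hω.toIsWeight hσw).le
            positivity
          · exact (integrableOn_dA_iff.1 hg.2).const_mul K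
          · filter_upwards [ae_restrict_mem measurableSet_unitDisk] with w hw
            have hσw : mobius a w ∈ unitDisk :=
              mem_unitDisk.2 (mobius_mem ha (mem_unitDisk.1 hw))
            have hchain := deriv_comp_mobius hf.1 ha hw
            have hrat := hK w hw
            calc ‖mder a w‖ ^ 2 *
                  (‖deriv f (mobius a w)‖ ^ 2 * radial ω (mobius a w))
                ≤ ‖mder a w‖ ^ 2 *
                  (‖deriv f (mobius a w)‖ ^ 2 * (K * radial ω w)) := by
                  apply mul_le_mul_of_nonneg_left _ (by positivity)
                  exact mul_le_mul_of_nonneg_left hrat (by positivity)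
              _ = K * (‖deriv g w‖ ^ 2 * radial ω w) := by
                  rw [hgdef, hchain, norm_mul, mul_pow]; ring
      _ = K * ∫ w in unitDisk, ‖deriv g w‖ ^ 2 * radial ω w := by
          rw [integral_const_mul]
  -- put things together
  rw [int_nev ω hω, key1]
  have hmain' := hmain g hg
  rw [int_nev ω hω] at hmain'
  set Ef := ∫ z in unitDisk, ‖deriv f z‖ ^ 2 * radial ω z ∂dA
  set Eg := ∫ w in unitDisk, ‖deriv g w‖ ^ 2 * radial ω w ∂dA
  calc c / K * Ef ≤ c * Eg := by
        rw [div_mul_eq_mul_div, div_le_iff₀ hK0]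
        calc c * Ef ≤ c * (K * Eg) := mul_le_mul_of_nonneg_left key2 hc.le
          _ = c * Eg * K := by ring
    _ ≤ _ := hmain'

end CR2

/-- For an admissible weight `ω`, an analytic self-map `φ` of `𝔻` with
`a = φ(0) ≠ 0`, and `ψ = σ_a ∘ φ`, the closed-range inequality for `φ` holds iff it holds


for `ψ`. -/
theorem closed_range_inequality_equiv
    (ω : ℝ → ℝ) (hω : IsAdmissibleWeight ω)
    (φ : ℂ → ℂ) (hφd : DifferentiableOn ℂ φ unitDisk) (hφm : MapsTo φ unitDisk unitDisk)
    (ha : φ 0 ≠ 0) :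
    (∃ c > (0:ℝ), ∀ f : ℂ → ℂ, memHω ω f →
        (∫ z in unitDisk,
            ‖deriv f z‖ ^ 2 * (Nevanlinna ω φ z / radial ω z) * radial ω z ∂dA) ≥
          c * ∫ z in unitDisk, ‖deriv f z‖ ^ 2 * radial ω z ∂dA) ↔
    (∃ c > (0:ℝ), ∀ f : ℂ → ℂ, memHω ω f →
        (∫ z in unitDisk,
            ‖deriv f z‖ ^ 2 *
              (Nevanlinna ω (fun z => mobius (φ 0) (φ z)) z / radial ω z) * radial ω z ∂dA) ≥
          c * ∫ z in unitDisk, ‖deriv f z‖ ^ 2 * radial ω z ∂dA) := by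
  have ha1 : ‖φ 0‖ < 1 := by
    have h0 : (0:ℂ) ∈ unitDisk := by simp [unitDisk]
    exact CR.mem_unitDisk.1 (hφm h0)
  constructor
  · intro H
    exact CR2.master ω hω (φ 0) ha1 φ _ hφm (fun w hw => rfl) H
  · intro H
    refine CR2.master ω hω (φ 0) ha1 (fun z => mobius (φ 0) (φ z)) φ
      (fun w hw => CR.mem_unitDisk.2 (CR.mobius_mem ha1 (CR.mem_unitDisk.1 (hφm hw)))) ?_ H
    intro w hw
    exact (CR.mobius_mobius ha1 (CR.mem_unitDisk.1 (hφm hw))).symm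

end
end
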